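/- Let T = wT_φ on C(K) with φ a non-surjective homeomorphism of K into itself. Then T is lower semi-Fredholm (closed range and finite codimension) if and only if the zero set Z(w) = {k ∈ K : w(k) = 0} is empty or consists only of isolated points of K; moreover in that case the defect def(T) = codim R(T) equals card Z(w). -/

import Mathlib

open Filter Topology

section aux

variable {K : Type*} [TopologicalSpace K] [CompactSpace K] [T2Space K]

theorem stmt15_tietze {φ : K → K} (hφc : Continuous φ) (hφi : Function.Injective φ)
    (h : C(K, ℂ)) : ∃ f : C(K, ℂ), ∀ k, f (φ k) = h k := by
  obtain ⟨g, hg⟩ := h.exists_extension (hφc.isClosedEmbedding hφi)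
  exact ⟨g, fun k => ContinuousMap.congr_fun hg k⟩

/-- The range of `T` is the set of multiples of `w`. -/
theorem stmt15_range {φ : K → K} (hφc : Continuous φ) (hφi : Function.Injective φ)
    {w : C(K, ℂ)} {T : C(K, ℂ) →L[ℂ] C(K, ℂ)}
    (hT : ∀ (f : C(K, ℂ)) (k : K), T f k = w k * f (φ k)) (g : C(K, ℂ)) :
    g ∈ Set.range ⇑T ↔ ∃ h : C(K, ℂ), ∀ k, g k = w k * h k := by
  constructor
  · rintro ⟨f, rfl⟩
    exact ⟨f.comp ⟨φ, hφc⟩, fun k => by simpa using hT f k⟩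
  · rintro ⟨h, hh⟩
    obtain ⟨f, hf⟩ := stmt15_tietze hφc hφi h
    refine ⟨f, ?_⟩
    ext k
    rw [hT f k, hf k, ← hh k]

open Classical in
theorem stmt15_zfin (Z : Set K) (hZc : IsClosed Z) (hiso : ∀ k ∈ Z, IsOpen ({k} : Set K)) :
    Z.Finite := by
  have hcomp : IsCompact Z := hZc.isCompact
  obtain ⟨t, ht⟩ := hcomp.elim_finite_subcover (fun k : K => if k ∈ Z then {k} else ∅)
    (by intro k; show IsOpen (if k ∈ Z then ({k} : Set K) else ∅)
        split_ifs with h; exact hiso k h; exact isOpen_empty)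
    (by intro k hk; simp only [Set.mem_iUnion]; exact ⟨k, by simp [hk]⟩)
  apply Set.Finite.subset t.finite_toSet
  intro k hk
  have := ht hk
  rw [Set.mem_iUnion₂] at this
  obtain ⟨i, hi, hki⟩ := this
  by_cases h : i ∈ Z
  · rw [if_pos h] at hki; simp at hki; subst hki; exact hi
  · rw [if_neg h] at hki; simp at hki

/-- prescribing values at finitely many points -/
theorem stmt15_eval_surj (s : Finset K) (v : K → ℂ) :
    ∃ f : C(K, ℂ), ∀ z ∈ s, f z = v z := by
  classical
  have key : ∀ z : K, ∃ fz : C(K, ℂ), fz z = 1 ∧ ∀ y ∈ s, y ≠ z → fz y = 0 := by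
    intro z
    obtain ⟨u, hu0, hu1, -⟩ := exists_continuous_zero_one_of_isClosed
      ((s.erase z).finite_toSet.isClosed) (isClosed_singleton (x := z))
      (by rw [Set.disjoint_singleton_right]; simp)
    refine ⟨⟨fun k => ((u k : ℝ) : ℂ), Complex.continuous_ofReal.comp u.continuous⟩, ?_, ?_⟩
    · have := hu1 (Set.mem_singleton z)
      simp only [ContinuousMap.coe_mk]
      rw [this]; simp
    · intro y hy hne
      have : u y = 0 := hu0 (by simp [Finset.mem_erase, hne, hy])
      simp only [ContinuousMap.coe_mk]
      rw [this]; simp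
  choose bump hb1 hb0 using key
  refine ⟨∑ z ∈ s, v z • bump z, ?_⟩
  intro z hz
  rw [ContinuousMap.sum_apply]
  rw [Finset.sum_eq_single z]
  · rw [ContinuousMap.smul_apply, hb1 z, smul_eq_mul, mul_one]
  · intro y hy hne
    rw [ContinuousMap.smul_apply, hb0 y z hz hne.symm, smul_zero]
  · intro h; exact absurd hz h

/-- If the quotient is finite dimensional then the zero set is finite. -/
theorem stmt15_fin {φ : K → K} {w : C(K, ℂ)} {T : C(K, ℂ) →L[ℂ] C(K, ℂ)}
    (hT : ∀ (f : C(K, ℂ)) (k : K), T f k = w k * f (φ k))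
    (hfd : FiniteDimensional ℂ (C(K, ℂ) ⧸ LinearMap.range (T : C(K, ℂ) →ₗ[ℂ] C(K, ℂ)))) :
    {k : K | w k = 0}.Finite := by
  by_contra hinf
  have hinf' : {k : K | w k = 0}.Infinite := hinf
  obtain ⟨s, hsub, hcard⟩ := hinf'.exists_subset_card_eq
    (Module.finrank ℂ (C(K, ℂ) ⧸ LinearMap.range (T : C(K, ℂ) →ₗ[ℂ] C(K, ℂ))) + 1)
  classical
  let Es : C(K, ℂ) →ₗ[ℂ] ({x // x ∈ s} → ℂ) :=
    { toFun := fun f z => f z.1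
      map_add' := fun f g => by funext z; simp
      map_smul' := fun c f => by funext z; simp }
  have hle : LinearMap.range (T : C(K, ℂ) →ₗ[ℂ] C(K, ℂ)) ≤ LinearMap.ker Es := by
    rintro g ⟨f, rfl⟩
    rw [LinearMap.mem_ker]
    funext z
    show (T f) z.1 = 0
    rw [hT f z.1, hsub z.2, zero_mul]
  have hsurj : Function.Surjective Es := by
    intro v
    obtain ⟨f, hf⟩ := stmt15_eval_surj s (fun k => if h : k ∈ s then v ⟨k, h⟩ else 0)
    refine ⟨f, funext fun z => ?_⟩
    show f z.1 = v z
    rw [hf z.1 z.2, dif_pos z.2]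
  let Eb := (LinearMap.range (T : C(K, ℂ) →ₗ[ℂ] C(K, ℂ))).liftQ Es hle
  have hsurj' : Function.Surjective Eb := by
    intro v
    obtain ⟨f, hf⟩ := hsurj v
    exact ⟨Submodule.Quotient.mk f, by rw [Submodule.liftQ_apply]; exact hf⟩
  have h1 : Module.finrank ℂ ({x // x ∈ s} → ℂ) ≤
      Module.finrank ℂ (C(K, ℂ) ⧸ LinearMap.range (T : C(K, ℂ) →ₗ[ℂ] C(K, ℂ))) := by
    have := LinearMap.finrank_range_le Eb
    rwa [LinearMap.range_eq_top.mpr hsurj', finrank_top] at this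
  rw [Module.finrank_pi, Fintype.card_coe, hcard] at h1
  omega

/-- The special function `conj w / sqrt ‖w‖`. -/
noncomputable def stmt15_g (w : C(K, ℂ)) : C(K, ℂ) where
  toFun k := (starRingEnd ℂ) (w k) / ((Real.sqrt ‖w k‖ : ℝ) : ℂ)
  continuous_toFun := by
    have hnorm : ∀ k : K, ‖(starRingEnd ℂ) (w k) / ((Real.sqrt ‖w k‖ : ℝ) : ℂ)‖
        = Real.sqrt ‖w k‖ := by
      intro k
      rcases eq_or_ne (w k) 0 with h | h
      · simp [h]
      · rw [norm_div, RCLike.norm_conj, Complex.norm_real, Real.norm_eq_abs,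
          abs_of_nonneg (Real.sqrt_nonneg _), Real.div_sqrt]
    rw [continuous_iff_continuousAt]
    intro k
    rcases eq_or_ne (w k) 0 with h | h
    · have h0 : Tendsto (fun k' => Real.sqrt ‖w k'‖) (𝓝 k) (𝓝 0) := by
        have hc : Continuous fun k' => Real.sqrt ‖w k'‖ :=
          Real.continuous_sqrt.comp w.continuous.norm
        have := hc.continuousAt (x := k)
        rwa [ContinuousAt, h, norm_zero, Real.sqrt_zero] at this
      have htend := squeeze_zero_norm (fun k' => (hnorm k').le) h0
      rw [ContinuousAt, h]
      simpa using htend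
    · have hs : Real.sqrt ‖w k‖ ≠ 0 := by
        rw [Real.sqrt_ne_zero']
        exact norm_pos_iff.mpr h
      refine ContinuousAt.div ?_ ?_ (by exact_mod_cast hs)
      · exact (Complex.continuous_conj.comp w.continuous).continuousAt
      · exact (Complex.continuous_ofReal.comp
          (Real.continuous_sqrt.comp w.continuous.norm)).continuousAt

theorem stmt15_g_norm (w : C(K, ℂ)) (k : K) : ‖stmt15_g w k‖ = Real.sqrt ‖w k‖ := by
  show ‖(starRingEnd ℂ) (w k) / ((Real.sqrt ‖w k‖ : ℝ) : ℂ)‖ = _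
  rcases eq_or_ne (w k) 0 with h | h
  · simp [h]
  · rw [norm_div, RCLike.norm_conj, Complex.norm_real, Real.norm_eq_abs,
      abs_of_nonneg (Real.sqrt_nonneg _), Real.div_sqrt]

theorem stmt15_g_zero (w : C(K, ℂ)) (k : K) (h : w k = 0) : stmt15_g w k = 0 := by
  show (starRingEnd ℂ) (w k) / _ = 0
  rw [h]; simp

end aux

section aux2

variable {K : Type*} [TopologicalSpace K] [CompactSpace K] [T2Space K]

theorem stmt15_happrox (w : C(K, ℂ)) {t : ℝ} (ht : 0 < t) :
    ∃ h : C(K, ℂ), ∀ k, ‖w k * h k - stmt15_g w k‖ ≤ 1 / Real.sqrt t := by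
  have key : ∀ b : ℝ, 0 < b → Real.sqrt b / b * (t * b) = t * Real.sqrt b := by
    intro b hb; field_simp
  set F : K → ℂ := fun k => stmt15_g w k / w k * ((min 1 (t * ‖w k‖) : ℝ) : ℂ) with hF
  have hbound : ∀ k, ‖F k‖ ≤ t * Real.sqrt ‖w k‖ := by
    intro k
    rcases eq_or_ne (w k) 0 with h | h
    · simp only [hF, stmt15_g_zero w k h, h]
      simp
    · have hw : (0:ℝ) < ‖w k‖ := norm_pos_iff.mpr h
      simp only [hF]
      rw [norm_mul, norm_div, stmt15_g_norm, Complex.norm_real, Real.norm_eq_abs,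
        abs_of_nonneg (le_min (by norm_num) (by positivity))]
      calc Real.sqrt ‖w k‖ / ‖w k‖ * min 1 (t * ‖w k‖)
          ≤ Real.sqrt ‖w k‖ / ‖w k‖ * (t * ‖w k‖) :=
            mul_le_mul_of_nonneg_left (min_le_right _ _) (by positivity)
        _ = t * Real.sqrt ‖w k‖ := key _ hw
  have hcont : Continuous F := by
    rw [continuous_iff_continuousAt]
    intro k
    rcases eq_or_ne (w k) 0 with h | h
    · have h0 : Tendsto (fun k' => t * Real.sqrt ‖w k'‖) (𝓝 k) (𝓝 0) := by
        have hc : Continuous fun k' => t * Real.sqrt ‖w k'‖ :=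
          continuous_const.mul (Real.continuous_sqrt.comp w.continuous.norm)
        have := hc.continuousAt (x := k)
        rwa [ContinuousAt, h, norm_zero, Real.sqrt_zero, mul_zero] at this
      have htend := squeeze_zero_norm hbound h0
      rw [ContinuousAt]
      have hFk : F k = 0 := by simp only [hF, stmt15_g_zero w k h, h]; simp
      rw [hFk]; exact htend
    · apply ContinuousAt.mul
      · exact ContinuousAt.div (stmt15_g w).continuous.continuousAt w.continuous.continuousAt h
      · exact (Complex.continuous_ofReal.comp
          (continuous_const.min (continuous_const.mul w.continuous.norm))).continuousAt
  refine ⟨⟨F, hcont⟩, fun k => ?_⟩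
  show ‖w k * F k - stmt15_g w k‖ ≤ _
  rcases eq_or_ne (w k) 0 with h | h
  · rw [h, stmt15_g_zero w k h]
    simp
  · have hw : (0:ℝ) < ‖w k‖ := norm_pos_iff.mpr h
    have hwF : w k * F k = stmt15_g w k * ((min 1 (t * ‖w k‖) : ℝ) : ℂ) := by
      simp only [hF]; rw [← mul_assoc, mul_div_cancel₀ _ h]
    rw [hwF]
    have heq : stmt15_g w k * ((min 1 (t * ‖w k‖) : ℝ) : ℂ) - stmt15_g w k
        = stmt15_g w k * (((min 1 (t * ‖w k‖) : ℝ) : ℂ) - 1) := by ring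
    rw [heq, norm_mul, stmt15_g_norm]
    rcases le_or_gt 1 (t * ‖w k‖) with hm | hm
    · rw [min_eq_left hm]
      simp
    · rw [min_eq_right hm.le]
      have h1 : ‖((t * ‖w k‖ : ℝ) : ℂ) - 1‖ ≤ 1 := by
        have hcast : ((t * ‖w k‖ : ℝ) : ℂ) - 1 = ((t * ‖w k‖ - 1 : ℝ) : ℂ) := by push_cast; ring
        rw [hcast, Complex.norm_real, Real.norm_eq_abs, abs_of_nonpos (by linarith)]
        have : 0 ≤ t * ‖w k‖ := by positivity
        linarith
      have h2 : Real.sqrt ‖w k‖ ≤ 1 / Real.sqrt t := by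
        rw [div_eq_mul_inv, one_mul, ← Real.sqrt_inv]
        apply Real.sqrt_le_sqrt
        rw [← one_div, le_div_iff₀ ht]
        linarith
      calc Real.sqrt ‖w k‖ * ‖((t * ‖w k‖ : ℝ):ℂ) - 1‖ ≤ Real.sqrt ‖w k‖ * 1 :=
            mul_le_mul_of_nonneg_left h1 (Real.sqrt_nonneg _)
        _ = Real.sqrt ‖w k‖ := mul_one _
        _ ≤ 1 / Real.sqrt t := h2

end aux2

section aux3

variable {K : Type*} [TopologicalSpace K] [CompactSpace K] [T2Space K]

theorem stmt15_main {φ : K → K} (hφc : Continuous φ) (hφi : Function.Injective φ)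
    {w : C(K, ℂ)} {T : C(K, ℂ) →L[ℂ] C(K, ℂ)}
    (hT : ∀ (f : C(K, ℂ)) (k : K), T f k = w k * f (φ k))
    (hiso : ∀ k : K, w k = 0 → IsOpen ({k} : Set K)) :
    IsClosed (Set.range ⇑T) ∧ FiniteDimensional ℂ (C(K, ℂ) ⧸ LinearMap.range (T : C(K, ℂ) →ₗ[ℂ] C(K, ℂ))) ∧
      Module.finrank ℂ (C(K, ℂ) ⧸ LinearMap.range (T : C(K, ℂ) →ₗ[ℂ] C(K, ℂ))) = Nat.card {k : K | w k = 0} := by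
  classical
  have hZclosed : IsClosed {k : K | w k = 0} := isClosed_eq w.continuous continuous_const
  have hZfin : {k : K | w k = 0}.Finite := stmt15_zfin _ hZclosed (fun k hk => hiso k hk)
  have hchar : ∀ g : C(K, ℂ), g ∈ Set.range ⇑T ↔ ∀ k, w k = 0 → g k = 0 := by
    intro g
    rw [stmt15_range hφc hφi hT]
    constructor
    · rintro ⟨h, hh⟩ k hk
      rw [hh k, hk, zero_mul]
    · intro hg
      have hcont : Continuous fun k => g k / w k := by
        rw [continuous_iff_continuousAt]
        intro k
        rcases eq_or_ne (w k) 0 with h0 | h0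
        · have hmem : {k} ∈ 𝓝 k := (hiso k h0).mem_nhds rfl
          have hev : (fun k' => g k' / w k') =ᶠ[𝓝 k] fun _ => g k / w k :=
            Filter.eventuallyEq_of_mem hmem fun x hx => by
              rw [Set.mem_singleton_iff] at hx; rw [hx]
          exact continuousAt_const.congr hev.symm
        · exact g.continuous.continuousAt.div w.continuous.continuousAt h0
      refine ⟨⟨_, hcont⟩, fun k => ?_⟩
      rcases eq_or_ne (w k) 0 with h0 | h0
      · show g k = w k * (g k / w k)
        rw [hg k h0, h0]; simp
      · show g k = w k * (g k / w k)
        rw [mul_div_cancel₀ _ h0]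
  have hclosed : IsClosed (Set.range ⇑T) := by
    have hset : Set.range ⇑T = ⋂ k ∈ {k : K | w k = 0}, {g : C(K, ℂ) | g k = 0} := by
      ext g
      simp only [Set.mem_iInter, Set.mem_setOf_eq]
      exact (hchar g).trans (by tauto)
    rw [hset]
    exact isClosed_biInter fun k _ =>
      isClosed_eq (continuous_eval_const k) continuous_const
  haveI : Fintype ↥{k : K | w k = 0} := hZfin.fintype
  let E : C(K, ℂ) →ₗ[ℂ] (↥{k : K | w k = 0} → ℂ) :=
    { toFun := fun f z => f z.1
      map_add' := fun f g => by funext z; simp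
      map_smul' := fun c f => by funext z; simp }
  have hker : LinearMap.range (T : C(K, ℂ) →ₗ[ℂ] C(K, ℂ)) = LinearMap.ker E := by
    ext g
    rw [LinearMap.mem_ker, LinearMap.mem_range]
    have hrfl : (∃ y, (T : C(K, ℂ) →ₗ[ℂ] C(K, ℂ)) y = g) ↔ g ∈ Set.range ⇑T := Iff.rfl
    rw [hrfl, hchar g]
    constructor
    · intro hg; funext z; exact hg z.1 z.2
    · intro hg k hk; exact congrFun hg ⟨k, hk⟩
  have hEsurj : Function.Surjective E := by
    intro v
    have hlc : IsLocallyConstant (fun k => if h : w k = 0 then v ⟨k, h⟩ else 0 : K → ℂ) := by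
      rw [IsLocallyConstant.iff_exists_open]
      intro x
      rcases eq_or_ne (w x) 0 with h0 | h0
      · exact ⟨{x}, hiso x h0, rfl, fun y hy => by
          rw [Set.mem_singleton_iff] at hy; rw [hy]⟩
      · refine ⟨{k : K | w k = 0}ᶜ, hZclosed.isOpen_compl, h0, fun y hy => ?_⟩
        rw [Set.mem_compl_iff, Set.mem_setOf_eq] at hy
        rw [dif_neg hy, dif_neg h0]
    refine ⟨⟨_, hlc.continuous⟩, funext fun z => ?_⟩
    show (if h : w z.1 = 0 then v ⟨z.1, h⟩ else 0) = v z
    rw [dif_pos (show w z.1 = 0 from z.2)]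
  have e : (C(K, ℂ) ⧸ LinearMap.range (T : C(K, ℂ) →ₗ[ℂ] C(K, ℂ))) ≃ₗ[ℂ] (↥{k : K | w k = 0} → ℂ) :=
    (Submodule.quotEquivOfEq _ _ hker).trans (E.quotKerEquivOfSurjective hEsurj)
  refine ⟨hclosed, Module.Finite.equiv e.symm, ?_⟩
  rw [e.finrank_eq, Module.finrank_pi, Nat.card_eq_fintype_card]

end aux3

/-- `T = w T_φ` (with `φ` a non-surjective homeomorphism into `K`) is lower
semi-Fredholm iff every point of `Z(w)` is isolated in `K` (this includes the case
`Z(w) = ∅`); moreover in that case the defect of `T` equals `card Z(w)`. -/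
theorem stmt15 (K : Type*) [TopologicalSpace K] [CompactSpace K] [T2Space K]
    (φ : K → K) (hφc : Continuous φ) (hφi : Function.Injective φ)
    (hns : Set.range φ ≠ Set.univ)
    (w : C(K, ℂ)) (T : C(K, ℂ) →L[ℂ] C(K, ℂ))
    (hT : ∀ (f : C(K, ℂ)) (k : K), T f k = w k * f (φ k)) :
    ((IsClosed (Set.range T) ∧ FiniteDimensional ℂ (C(K, ℂ) ⧸ LinearMap.range (T : C(K, ℂ) →ₗ[ℂ] C(K, ℂ)))) ↔
      ∀ k : K, w k = 0 → IsOpen ({k} : Set K)) ∧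
    ((∀ k : K, w k = 0 → IsOpen ({k} : Set K)) →
      Module.finrank ℂ (C(K, ℂ) ⧸ LinearMap.range (T : C(K, ℂ) →ₗ[ℂ] C(K, ℂ))) = Nat.card {k : K | w k = 0}) := by
  constructor
  · constructor
    · rintro ⟨hcl, hfd⟩ k0 hk0
      by_contra hno
      have hZfin : {k : K | w k = 0}.Finite := stmt15_fin hT hfd
      -- every open neighborhood of k0 contains a point where w ≠ 0
      have hfreq : ∀ U : Set K, IsOpen U → k0 ∈ U → ∃ k ∈ U, w k ≠ 0 := by
        intro U hU hkU
        by_contra hc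
        push_neg at hc
        have hsub : U ⊆ {k : K | w k = 0} := fun k hk => hc k hk
        have hZ' : IsClosed ({k : K | w k = 0} \ {k0}) :=
          (hZfin.subset Set.diff_subset).isClosed
        have hsingl : ({k0} : Set K) = U ∩ ({k : K | w k = 0} \ {k0})ᶜ := by
          ext x
          simp only [Set.mem_singleton_iff, Set.mem_inter_iff, Set.mem_compl_iff,
            Set.mem_diff, Set.mem_setOf_eq]
          constructor
          · rintro rfl; exact ⟨hkU, fun h => h.2 rfl⟩
          · rintro ⟨hxU, hx⟩
            by_contra hne
            exact hx ⟨hsub hxU, hne⟩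
        exact hno (by rw [hsingl]; exact hU.inter hZ'.isOpen_compl)
      -- the square-root function lies in the closure of the range
      have hgcl : stmt15_g w ∈ closure (Set.range ⇑T) := by
        rw [Metric.mem_closure_iff]
        intro ε hε
        set t : ℝ := (1/ε)^2 + 1 with ht
        have ht0 : 0 < t := by positivity
        obtain ⟨h, hh⟩ := stmt15_happrox w ht0
        obtain ⟨f, hf⟩ := stmt15_tietze hφc hφi h
        refine ⟨T f, Set.mem_range_self f, ?_⟩
        have hle : dist (stmt15_g w) (T f) ≤ 1 / Real.sqrt t := by
          rw [dist_comm, ContinuousMap.dist_le (by positivity)]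
          intro k
          rw [dist_eq_norm]
          have hTf : T f k = w k * h k := by rw [hT f k, hf k]
          calc ‖T f k - stmt15_g w k‖ = ‖w k * h k - stmt15_g w k‖ := by rw [hTf]
            _ ≤ 1 / Real.sqrt t := hh k
        have hlt : 1 / Real.sqrt t < ε := by
          rw [div_lt_iff₀ (Real.sqrt_pos.mpr ht0)]
          have h1 : Real.sqrt ((1/ε)^2) < Real.sqrt t :=
            Real.sqrt_lt_sqrt (by positivity) (by rw [ht]; linarith)
          rw [Real.sqrt_sq (by positivity)] at h1
          calc (1:ℝ) = ε * (1/ε) := by field_simp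
            _ < ε * Real.sqrt t := (mul_lt_mul_iff_right₀ hε).mpr h1
        exact lt_of_le_of_lt hle hlt
      have hgr : stmt15_g w ∈ Set.range ⇑T := by rwa [hcl.closure_eq] at hgcl
      obtain ⟨f, hfg⟩ := hgr
      set M : ℝ := ‖f (φ k0)‖ + 1 with hM
      clear_value M
      have hM0 : 0 < M := by rw [hM]; positivity
      have hU1 : IsOpen {k : K | ‖f (φ k)‖ < M} :=
        isOpen_lt (f.continuous.comp hφc).norm continuous_const
      have hU2 : IsOpen {k : K | ‖w k‖ < (1/M)^2} :=
        isOpen_lt w.continuous.norm continuous_const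
      have hk0U : k0 ∈ {k : K | ‖f (φ k)‖ < M} ∩ {k : K | ‖w k‖ < (1/M)^2} := by
        constructor
        · show ‖f (φ k0)‖ < M
          rw [hM]; linarith
        · show ‖w k0‖ < (1/M)^2
          rw [hk0, norm_zero]
          exact pow_pos (div_pos one_pos hM0) 2
      obtain ⟨k, hkU, hk⟩ := hfreq _ (hU1.inter hU2) hk0U
      obtain ⟨hkU1, hkU2⟩ := hkU
      have h1 : w k * f (φ k) = stmt15_g w k := by
        rw [← hT f k, hfg]
      have h2 : ‖w k‖ * ‖f (φ k)‖ = Real.sqrt ‖w k‖ := by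
        rw [← norm_mul, h1, stmt15_g_norm]
      have hw : (0:ℝ) < ‖w k‖ := norm_pos_iff.mpr hk
      have hs : (0:ℝ) < Real.sqrt ‖w k‖ := Real.sqrt_pos.mpr hw
      have hsq : Real.sqrt ‖w k‖ * Real.sqrt ‖w k‖ = ‖w k‖ := Real.mul_self_sqrt hw.le
      have h3 : Real.sqrt ‖w k‖ * ‖f (φ k)‖ = 1 := by
        apply mul_left_cancel₀ hs.ne'
        rw [← mul_assoc, hsq, mul_one]
        exact h2
      have h4 : Real.sqrt ‖w k‖ < 1/M := by
        have := Real.sqrt_lt_sqrt (norm_nonneg _) hkU2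
        rwa [Real.sqrt_sq (le_of_lt (div_pos one_pos hM0))] at this
      have c1 : Real.sqrt ‖w k‖ * ‖f (φ k)‖ < Real.sqrt ‖w k‖ * M :=
        mul_lt_mul_of_pos_left hkU1 hs
      have c2 : Real.sqrt ‖w k‖ * M < (1/M) * M := mul_lt_mul_of_pos_right h4 hM0
      have c3 : (1/M) * M = 1 := by field_simp
      linarith
    · intro hiso
      obtain ⟨h1, h2, h3⟩ := stmt15_main hφc hφi hT hiso
      exact ⟨h1, h2⟩
  · intro hiso
    exact (stmt15_main hφc hφi hT hiso).2.2
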